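/- Let f = (1/3, 1/3, 1/3, 1/3, 1/3, 1/3) ∈ ℚ^6, let N ⊆ ℚ^6 be the subgroup generated by the standard basis vectors e_1, …, e_6 and f, and let P ⊆ ℝ^6 be the convex hull of {e_1, …, e_6, e_1 − f, …, e_6 − f}. Then the set 2P ∩ N contains exactly 78 points and the set 3P ∩ N contains exactly 314 points. -/

import Mathlib

open Pointwise

def gQ : (Fin 6 → ℕ) × ℕ → (Fin 6 → ℚ) := fun p i => (p.1 i : ℚ) - 1 + (p.2 : ℚ) / 3

def D (m : ℕ) : Finset ((Fin 6 → ℕ) × ℕ) :=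
  (Finset.range 3).biUnion fun r =>
    (Finset.Icc 0 (6 + m)).biUnion fun n =>
      ((Finset.Nat.antidiagonalTuple 6 n).filter
        (fun v => 6 ≤ n + m + 2*r ∧ n + 2*r ≤ 6 + m ∧ ∀ i, n ≤ 6 * v i + m)).image
        (fun v => (v, r))


lemma memN_iff (f : Fin 6 → ℚ) (hf : f = fun _ => 1 / 3)
    (N : AddSubgroup (Fin 6 → ℚ))
    (hN : N = AddSubgroup.closure
      (Set.range (fun j : Fin 6 => Pi.single j (1 : ℚ)) ∪ {f}))
    (w : Fin 6 → ℚ) :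
    w ∈ N ↔ ∃ (z : Fin 6 → ℤ) (r : ℤ), ∀ i, w i = z i + r / 3 := by
  subst hf hN
  constructor
  · intro hw
    induction hw using AddSubgroup.closure_induction with
    | mem x hx =>
      rcases hx with ⟨j, rfl⟩ | rfl
      · exact ⟨Pi.single j 1, 0, by
          intro i; simp [Pi.single_apply, apply_ite (fun z : ℤ => (z : ℚ))]⟩
      · exact ⟨0, 1, by intro i; norm_num⟩
    | zero => exact ⟨0, 0, by intro i; norm_num⟩
    | add a b _ _ ha hb =>
      obtain ⟨z, r, hz⟩ := ha; obtain ⟨z', r', hz'⟩ := hb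
      exact ⟨z + z', r + r', by intro i; simp [hz i, hz' i]; push_cast; ring⟩
    | neg a _ ha =>
      obtain ⟨z, r, hz⟩ := ha
      exact ⟨-z, -r, by intro i; simp [hz i]; push_cast; ring⟩
  · rintro ⟨z, r, hw⟩
    have hwe : w = (∑ j, z j • Pi.single j (1 : ℚ)) + r • (fun _ => 1/3 : Fin 6 → ℚ) := by
      funext i
      simp [hw i, Finset.sum_apply, Pi.single_apply, mul_ite]
      push_cast
      ring
    rw [hwe]
    refine AddSubgroup.add_mem _ (AddSubgroup.sum_mem _ fun j _ => AddSubgroup.zsmul_mem _ ?_ _)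
      (AddSubgroup.zsmul_mem _ ?_ _)
    · exact AddSubgroup.subset_closure (Or.inl ⟨j, rfl⟩)
    · exact AddSubgroup.subset_closure (Or.inr rfl)


lemma memP_iff (f : Fin 6 → ℚ) (hf : f = fun _ => 1 / 3)
    (V : Set (Fin 6 → ℚ))
    (hV : V = Set.range (fun j : Fin 6 => Pi.single j (1 : ℚ)) ∪
      Set.range (fun j : Fin 6 => Pi.single j (1 : ℚ) - f))
    (P : Set (Fin 6 → ℝ))
    (hP : P = convexHull ℝ ((fun q : Fin 6 → ℚ => fun i => (q i : ℝ)) '' V))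
    (x : Fin 6 → ℝ) :
    x ∈ P ↔ (-1 ≤ ∑ i, x i ∧ ∑ i, x i ≤ 1 ∧ ∀ i, ∑ j, x j ≤ 6 * x i + 1) := by
  subst hf hV hP
  constructor
  · intro hx
    have hconv : Convex ℝ {y : Fin 6 → ℝ |
        -1 ≤ ∑ i, y i ∧ ∑ i, y i ≤ 1 ∧ ∀ i, ∑ j, y j ≤ 6 * y i + 1} := by
      rintro y ⟨hy1, hy2, hy3⟩ z ⟨hz1, hz2, hz3⟩ a b ha hb hab
      have hsum : ∑ i, (a • y + b • z) i = a * ∑ i, y i + b * ∑ i, z i := by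
        simp [Finset.sum_add_distrib, Finset.mul_sum]
      refine ⟨by rw [hsum]; nlinarith, by rw [hsum]; nlinarith, fun i => ?_⟩
      have h3y := hy3 i; have h3z := hz3 i
      have hi : (a • y + b • z) i = a * y i + b * z i := by simp
      rw [hsum, hi]; nlinarith
    have hS : ((fun q : Fin 6 → ℚ => fun i => (q i : ℝ)) ''
        (Set.range (fun j : Fin 6 => Pi.single j (1 : ℚ)) ∪
          Set.range (fun j : Fin 6 => Pi.single j (1 : ℚ) - (fun _ => 1/3)))) ⊆
        {y : Fin 6 → ℝ | -1 ≤ ∑ i, y i ∧ ∑ i, y i ≤ 1 ∧ ∀ i, ∑ j, y j ≤ 6 * y i + 1} := by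
      rintro y ⟨q, hq, rfl⟩
      rcases hq with ⟨j, rfl⟩ | ⟨j, rfl⟩
      · have hc : ((fun q : Fin 6 → ℚ => fun i => (q i : ℝ)) (Pi.single j 1))
            = fun i => if i = j then (1:ℝ) else 0 := by
          funext i; simp [Pi.single_apply, apply_ite (fun q : ℚ => (q : ℝ))]
        rw [hc]
        have hsum : ∑ i, (if i = j then (1:ℝ) else 0) = 1 := by
          simp [Finset.sum_ite_eq]
        refine ⟨by rw [hsum]; norm_num, by rw [hsum], fun i => ?_⟩
        rw [hsum]; by_cases h : i = j <;> simp [h] <;> norm_num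
      · have hc : ((fun q : Fin 6 → ℚ => fun i => (q i : ℝ))
            (Pi.single j 1 - (fun _ => 1/3)))
            = fun i => (if i = j then (1:ℝ) else 0) - 1/3 := by
          funext i
          have : (Pi.single j 1 - (fun _ => 1/3) : Fin 6 → ℚ) i
              = (Pi.single j (1:ℚ) : Fin 6 → ℚ) i - 1/3 := rfl
          simp only [this]
          push_cast
          simp [Pi.single_apply, apply_ite (fun q : ℚ => (q : ℝ))]
        rw [hc]
        have hsum : ∑ i, ((if i = j then (1:ℝ) else 0) - 1/3) = -1 := by
          rw [Finset.sum_sub_distrib]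
          simp [Finset.sum_ite_eq]
          norm_num
        refine ⟨by rw [hsum], by rw [hsum]; norm_num, fun i => ?_⟩
        rw [hsum]; by_cases h : i = j <;> simp [h] <;> norm_num
    exact convexHull_min hS hconv hx
  · rintro ⟨h1, h2, h3⟩
    set s : ℝ := (1 - ∑ i, x i) / 2 with hs
    have hs0 : 0 ≤ s := by rw [hs]; linarith
    have hs1 : s ≤ 1 := by rw [hs]; linarith
    have hxi : ∀ i, 0 ≤ x i + s / 3 := by
      intro i; have := h3 i; rw [hs]; linarith
    set w : (Fin 6 ⊕ Fin 6) → ℝ :=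
      Sum.elim (fun j => (1 - s) * (x j + s/3)) (fun j => s * (x j + s/3)) with hw
    set z : (Fin 6 ⊕ Fin 6) → (Fin 6 → ℝ) :=
      Sum.elim (fun j i => if i = j then 1 else 0)
        (fun j i => (if i = j then 1 else 0) - 1/3) with hz
    have hT : ∑ j, (x j + s/3) = 1 := by
      rw [Finset.sum_add_distrib]; simp; rw [hs]; ring
    have hwsum : ∑ p, w p = 1 := by
      rw [Fintype.sum_sum_type]
      simp only [hw, Sum.elim_inl, Sum.elim_inr]
      rw [← Finset.mul_sum, ← Finset.mul_sum, hT]; ring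
    have hw0 : ∀ p ∈ Finset.univ, 0 ≤ w p := by
      rintro (j | j) _ <;> simp only [hw, Sum.elim_inl, Sum.elim_inr]
      · exact mul_nonneg (by linarith) (hxi j)
      · exact mul_nonneg hs0 (hxi j)
    have hzmem : ∀ p ∈ Finset.univ, z p ∈
        ((fun q : Fin 6 → ℚ => fun i => (q i : ℝ)) ''
        (Set.range (fun j : Fin 6 => Pi.single j (1 : ℚ)) ∪
          Set.range (fun j : Fin 6 => Pi.single j (1 : ℚ) - (fun _ => 1/3)))) := by
      rintro (j | j) _
      · refine ⟨Pi.single j 1, Or.inl ⟨j, rfl⟩, ?_⟩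
        funext i; simp [hz, Pi.single_apply, apply_ite (fun q : ℚ => (q : ℝ))]
      · refine ⟨Pi.single j 1 - (fun _ => 1/3), Or.inr ⟨j, rfl⟩, ?_⟩
        funext i
        simp [hz, Pi.single_apply, apply_ite (fun q : ℚ => (q : ℝ))]
        try (split <;> norm_num)
    have hmem := Finset.centerMass_mem_convexHull (Finset.univ) hw0
      (by rw [hwsum]; norm_num) hzmem
    have hcm : Finset.univ.centerMass w z = x := by
      rw [Finset.centerMass, hwsum, inv_one, one_smul]
      funext i
      rw [Finset.sum_apply]
      simp only [Pi.smul_apply, smul_eq_mul]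
      rw [Fintype.sum_sum_type]
      simp only [hw, hz, Sum.elim_inl, Sum.elim_inr]
      have key : ∀ c : Fin 6 → ℝ, ∑ j, c j * (if i = j then (1:ℝ) else 0) = c i := by
        intro c
        simp [mul_ite, Finset.sum_ite_eq]
      have e1 : ∑ j, (1 - s) * (x j + s/3) * (if i = j then (1:ℝ) else 0)
          = (1 - s) * (x i + s/3) := key _
      have e2 : ∑ j, s * (x j + s/3) * ((if i = j then (1:ℝ) else 0) - 1/3)
          = s * (x i + s/3) - s/3 := by
        have : ∀ j, s * (x j + s/3) * ((if i = j then (1:ℝ) else 0) - 1/3)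
            = s * (x j + s/3) * (if i = j then (1:ℝ) else 0) - s * (x j + s/3) * (1/3) := by
          intro j; ring
        simp only [this]
        rw [Finset.sum_sub_distrib, key]
        have : ∑ j, s * (x j + s/3) * (1/3) = s * (∑ j, (x j + s/3)) * (1/3) := by
          rw [Finset.mul_sum, Finset.sum_mul]
        rw [this, hT]; ring
      rw [e1, e2]; ring
    rw [hcm] at hmem
    exact hmem

lemma mem_smulP (f : Fin 6 → ℚ) (hf : f = fun _ => 1 / 3)
    (V : Set (Fin 6 → ℚ))
    (hV : V = Set.range (fun j : Fin 6 => Pi.single j (1 : ℚ)) ∪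
      Set.range (fun j : Fin 6 => Pi.single j (1 : ℚ) - f))
    (P : Set (Fin 6 → ℝ))
    (hP : P = convexHull ℝ ((fun q : Fin 6 → ℚ => fun i => (q i : ℝ)) '' V))
    (m : ℝ) (hm : 0 < m) (x : Fin 6 → ℝ) :
    x ∈ m • P ↔ (-m ≤ ∑ i, x i ∧ ∑ i, x i ≤ m ∧ ∀ i, ∑ j, x j ≤ 6 * x i + m) := by
  rw [Set.mem_smul_set_iff_inv_smul_mem₀ hm.ne', memP_iff f hf V hV P hP]
  have hsum : ∑ i, (m⁻¹ • x) i = m⁻¹ * ∑ i, x i := by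
    simp [Finset.mul_sum]
  have hmm : m * m⁻¹ = 1 := mul_inv_cancel₀ hm.ne'
  constructor
  · rintro ⟨h1, h2, h3⟩
    rw [hsum] at h1 h2
    refine ⟨by nlinarith, by nlinarith, fun i => ?_⟩
    have := h3 i
    rw [hsum] at this
    have hxi : (m⁻¹ • x) i = m⁻¹ * x i := rfl
    rw [hxi] at this
    nlinarith
  · rintro ⟨h1, h2, h3⟩
    rw [hsum]
    have hminv : 0 < m⁻¹ := inv_pos.mpr hm
    refine ⟨by nlinarith, by nlinarith, fun i => ?_⟩
    have := h3 i
    have hxi : (m⁻¹ • x) i = m⁻¹ * x i := rfl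
    rw [hxi]
    nlinarith

lemma mem_smulP_rat (f : Fin 6 → ℚ) (hf : f = fun _ => 1 / 3)
    (V : Set (Fin 6 → ℚ))
    (hV : V = Set.range (fun j : Fin 6 => Pi.single j (1 : ℚ)) ∪
      Set.range (fun j : Fin 6 => Pi.single j (1 : ℚ) - f))
    (P : Set (Fin 6 → ℝ))
    (hP : P = convexHull ℝ ((fun q : Fin 6 → ℚ => fun i => (q i : ℝ)) '' V))
    (m : ℕ) (hm : 0 < m) (w : Fin 6 → ℚ) :
    ((fun i => (w i : ℝ)) ∈ (m : ℝ) • P) ↔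
      (-(m:ℚ) ≤ ∑ i, w i ∧ ∑ i, w i ≤ m ∧ ∀ i, ∑ j, w j ≤ 6 * w i + m) := by
  rw [mem_smulP f hf V hV P hP (m:ℝ) (by exact_mod_cast hm)]
  have hs : ∑ i, ((w i : ℚ) : ℝ) = ((∑ i, w i : ℚ) : ℝ) := by push_cast; rfl
  constructor <;> rintro ⟨h1, h2, h3⟩ <;> refine ⟨?_, ?_, fun i => ?_⟩
  · rw [hs] at h1; exact_mod_cast h1
  · rw [hs] at h2; exact_mod_cast h2
  · have := h3 i; rw [hs] at this; exact_mod_cast this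
  · rw [hs]; exact_mod_cast h1
  · rw [hs]; exact_mod_cast h2
  · rw [hs]; exact_mod_cast h3 i

lemma setEq (f : Fin 6 → ℚ) (hf : f = fun _ => 1 / 3)
    (N : AddSubgroup (Fin 6 → ℚ))
    (hN : N = AddSubgroup.closure
      (Set.range (fun j : Fin 6 => Pi.single j (1 : ℚ)) ∪ {f}))
    (V : Set (Fin 6 → ℚ))
    (hV : V = Set.range (fun j : Fin 6 => Pi.single j (1 : ℚ)) ∪
      Set.range (fun j : Fin 6 => Pi.single j (1 : ℚ) - f))
    (P : Set (Fin 6 → ℝ))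
    (hP : P = convexHull ℝ ((fun q : Fin 6 → ℚ => fun i => (q i : ℝ)) '' V))
    (m : ℕ) (hm : 0 < m) (hm3 : m ≤ 3) :
    {w : Fin 6 → ℚ | w ∈ N ∧ (fun i => (w i : ℝ)) ∈ (m : ℝ) • P} = ↑((D m).image gQ) := by
  ext w
  simp only [Set.mem_setOf_eq, Finset.coe_image, Set.mem_image, Finset.mem_coe]
  rw [memN_iff f hf N hN, mem_smulP_rat f hf V hV P hP m hm]
  constructor
  · rintro ⟨⟨z, r, hwz⟩, h1, h2, h3⟩
    obtain ⟨z', r₀, hr0, hr3, hw'⟩ :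
        ∃ (z' : Fin 6 → ℤ) (r₀ : ℤ), 0 ≤ r₀ ∧ r₀ < 3 ∧ ∀ i, w i = z' i + (r₀ : ℚ) / 3 := by
      refine ⟨fun i => z i + r / 3, r % 3, Int.emod_nonneg r (by norm_num),
        Int.emod_lt_of_pos r (by norm_num), fun i => ?_⟩
      have hdiv : (3 : ℤ) * (r / 3) + r % 3 = r := Int.mul_ediv_add_emod r 3
      have hq : (3 : ℚ) * ((r / 3 : ℤ) : ℚ) + ((r % 3 : ℤ) : ℚ) = (r : ℚ) := by
        exact_mod_cast congrArg (fun t : ℤ => (t : ℚ)) hdiv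
      rw [hwz i]
      push_cast
      push_cast at hq
      linarith
    have hSw : (∑ i, w i) = ((∑ i, z' i : ℤ) : ℚ) + 2 * (r₀ : ℚ) := by
      rw [Finset.sum_congr rfl (fun i _ => hw' i), Finset.sum_add_distrib,
        Finset.sum_const]
      simp only [Finset.card_univ, Fintype.card_fin]
      push_cast
      ring
    have hA1 : -(m:ℤ) ≤ (∑ i, z' i) + 2 * r₀ := by
      rw [hSw] at h1
      have : ((-(m:ℤ) : ℤ) : ℚ) ≤ (((∑ i, z' i) + 2*r₀ : ℤ) : ℚ) := by push_cast; push_cast at h1; linarith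
      exact_mod_cast this
    have hA2 : (∑ i, z' i) + 2 * r₀ ≤ (m:ℤ) := by
      rw [hSw] at h2
      have : (((∑ i, z' i) + 2*r₀ : ℤ) : ℚ) ≤ (((m:ℕ):ℤ) : ℚ) := by push_cast; push_cast at h2; linarith
      exact_mod_cast this
    have hAi : ∀ i, (∑ j, z' j) ≤ 6 * z' i + m := by
      intro i
      have h := h3 i
      rw [hSw, hw' i] at h
      have : (((∑ j, z' j) : ℤ) : ℚ) ≤ ((6 * z' i + m : ℤ) : ℚ) := by push_cast; push_cast at h; linarith
      exact_mod_cast this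
    have hzlb : ∀ i, -1 ≤ z' i := by
      intro i
      have ha := hAi i
      omega
    have hvz : ∀ i, (((z' i + 1).toNat : ℕ) : ℤ) = z' i + 1 := by
      intro i
      exact Int.toNat_of_nonneg (by have := hzlb i; omega)
    have hnA : ((∑ i, (z' i + 1).toNat : ℕ) : ℤ) = (∑ i, z' i) + 6 := by
      push_cast
      rw [Finset.sum_congr rfl (fun i _ => hvz i), Finset.sum_add_distrib,
        Finset.sum_const]
      simp
    refine ⟨(fun i => (z' i + 1).toNat, r₀.toNat), ?_, ?_⟩
    · simp only [D, Finset.mem_biUnion, Finset.mem_range, Finset.mem_Icc, Finset.mem_image,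
        Finset.mem_filter, Finset.Nat.mem_antidiagonalTuple]
      refine ⟨r₀.toNat, by omega, ∑ i, (z' i + 1).toNat, ⟨by omega, by omega⟩,
        fun i => (z' i + 1).toNat, ⟨⟨rfl, by omega, by omega, fun i => ?_⟩, rfl⟩⟩
      show (∑ j, (z' j + 1).toNat) ≤ 6 * (z' i + 1).toNat + m
      have ha := hAi i
      have hb := hvz i
      omega
    · funext i
      show (((z' i + 1).toNat : ℕ) : ℚ) - 1 + ((r₀.toNat : ℕ) : ℚ) / 3 = w i
      rw [hw' i]
      have c1 : (((z' i + 1).toNat : ℕ) : ℚ) = ((z' i : ℤ) : ℚ) + 1 := by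
        exact_mod_cast congrArg (fun t : ℤ => (t : ℚ)) (hvz i)
      have c2 : ((r₀.toNat : ℕ) : ℚ) = ((r₀ : ℤ) : ℚ) := by
        exact_mod_cast congrArg (fun t : ℤ => (t : ℚ)) (Int.toNat_of_nonneg hr0)
      rw [c1, c2]
      ring
  · rintro ⟨⟨v, r⟩, hmem, rfl⟩
    simp only [D, Finset.mem_biUnion, Finset.mem_range, Finset.mem_Icc, Finset.mem_image,
      Finset.mem_filter, Finset.Nat.mem_antidiagonalTuple] at hmem
    obtain ⟨r', hr', n, ⟨-, hn6⟩, v', ⟨⟨hsum, hc1, hc2, hc3⟩, heq⟩⟩ := hmem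
    injection heq with hv hr
    subst hv
    subst hr
    have hSw : (∑ i, gQ (v', r') i) = (n : ℚ) - 6 + 2 * r' := by
      simp only [gQ]
      rw [Finset.sum_add_distrib, Finset.sum_sub_distrib, ← Nat.cast_sum, hsum,
        Finset.sum_const, Finset.sum_const]
      simp only [Finset.card_univ, Fintype.card_fin]
      push_cast
      ring
    refine ⟨⟨fun i => (v' i : ℤ) - 1, (r' : ℤ), ?_⟩, ?_, ?_, ?_⟩
    · intro i; simp only [gQ]; push_cast; ring
    · rw [hSw]
      have : (6 : ℚ) ≤ (n : ℚ) + m + 2*r' := by exact_mod_cast hc1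
      linarith
    · rw [hSw]
      have : (n : ℚ) + 2*r' ≤ 6 + m := by exact_mod_cast hc2
      linarith
    · intro i
      rw [hSw]
      have : (n : ℚ) ≤ 6 * (v' i) + m := by exact_mod_cast hc3 i
      simp only [gQ]
      linarith

lemma snd_mem_D {m : ℕ} {p : (Fin 6 → ℕ) × ℕ} (hp : p ∈ D m) : p.2 < 3 := by
  simp only [D, Finset.mem_biUnion, Finset.mem_range, Finset.mem_image] at hp
  obtain ⟨r, hr, n, -, v, -, rfl⟩ := hp
  exact hr

lemma gQ_injOn (m : ℕ) : Set.InjOn gQ (D m : Set ((Fin 6 → ℕ) × ℕ)) := by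
  rintro ⟨v, r⟩ hv ⟨v', r'⟩ hv' h
  have hr : r < 3 := snd_mem_D hv
  have hr' : r' < 3 := snd_mem_D hv'
  have key : ∀ i, 3 * v i + r = 3 * v' i + r' := by
    intro i
    have hi := congrFun h i
    simp only [gQ] at hi
    have : (3 * v i + r : ℚ) = (3 * v' i + r' : ℚ) := by push_cast; push_cast at hi; linarith
    exact_mod_cast this
  have hrr : r = r' := by have := key 0; omega
  subst hrr
  have : v = v' := by funext i; have := key i; omega
  subst this
  rfl

lemma cardD (m : ℕ) : (D m).card =
    ∑ r ∈ Finset.range 3, ∑ n ∈ Finset.Icc 0 (6+m),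
      ((Finset.Nat.antidiagonalTuple 6 n).filter
        (fun v => 6 ≤ n + m + 2*r ∧ n + 2*r ≤ 6 + m ∧ ∀ i, n ≤ 6 * v i + m)).card := by
  rw [D, Finset.card_biUnion]
  · refine Finset.sum_congr rfl fun r _ => ?_
    rw [Finset.card_biUnion]
    · refine Finset.sum_congr rfl fun n _ => ?_
      rw [Finset.card_image_of_injective _ (fun a b h => congrArg Prod.fst h)]
    · intro n _ n' _ hnn
      rw [Function.onFun, Finset.disjoint_left]
      rintro ⟨v, r₂⟩ h1 h2
      simp only [Finset.mem_image, Finset.mem_filter,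
        Finset.Nat.mem_antidiagonalTuple] at h1 h2
      obtain ⟨u, ⟨hu, -⟩, hue⟩ := h1
      obtain ⟨u', ⟨hu', -⟩, hue'⟩ := h2
      have e1 : u = v := congrArg Prod.fst hue
      have e2 : u' = v := congrArg Prod.fst hue'
      subst e1; subst e2
      exact hnn (hu ▸ hu')
  · intro r _ r' _ hrr
    rw [Function.onFun, Finset.disjoint_left]
    rintro p h1 h2
    simp only [Finset.mem_biUnion, Finset.mem_image] at h1 h2
    obtain ⟨n, -, u, -, rfl⟩ := h1
    obtain ⟨n', -, u', -, he⟩ := h2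
    exact hrr ((congrArg Prod.snd he).symm)

set_option maxRecDepth 100000 in
set_option maxHeartbeats 8000000 in
lemma cardD2 : (D 2).card = 78 := by rw [cardD]; decide

set_option maxRecDepth 100000 in
set_option maxHeartbeats 16000000 in
lemma cardD3 : (D 3).card = 314 := by rw [cardD]; decide

/-- Let `f = (1/3,…,1/3) ∈ ℚ^6`, let `N = ℤ⟨e₁,…,e₆,f⟩ ⊆ ℚ^6`, and let
`P ⊆ ℝ^6` be the convex hull of `{e₁,…,e₆, e₁-f,…,e₆-f}`. Then `2P` contains exactly 78
points of `N` and `3P` contains exactly 314 points of `N`. -/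
theorem stmt_9 (f : Fin 6 → ℚ) (hf : f = fun _ => 1 / 3)
    (N : AddSubgroup (Fin 6 → ℚ))
    (hN : N = AddSubgroup.closure
      (Set.range (fun j : Fin 6 => Pi.single j (1 : ℚ)) ∪ {f}))
    (V : Set (Fin 6 → ℚ))
    (hV : V = Set.range (fun j : Fin 6 => Pi.single j (1 : ℚ)) ∪
      Set.range (fun j : Fin 6 => Pi.single j (1 : ℚ) - f))
    (P : Set (Fin 6 → ℝ))
    (hP : P = convexHull ℝ ((fun q : Fin 6 → ℚ => fun i => (q i : ℝ)) '' V)) :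
    Set.ncard {w : Fin 6 → ℚ | w ∈ N ∧ (fun i => (w i : ℝ)) ∈ (2 : ℝ) • P} = 78 ∧
    Set.ncard {w : Fin 6 → ℚ | w ∈ N ∧ (fun i => (w i : ℝ)) ∈ (3 : ℝ) • P} = 314 := by
  constructor
  · have hs := setEq f hf N hN V hV P hP 2 (by norm_num) (by norm_num)
    have hcast : ((2:ℕ) : ℝ) = (2:ℝ) := by norm_num
    rw [hcast] at hs
    rw [hs, Set.ncard_coe_finset, Finset.card_image_of_injOn (gQ_injOn 2), cardD2]
  · have hs := setEq f hf N hN V hV P hP 3 (by norm_num) (by norm_num)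
    have hcast : ((3:ℕ) : ℝ) = (3:ℝ) := by norm_num
    rw [hcast] at hs
    rw [hs, Set.ncard_coe_finset, Finset.card_image_of_injOn (gQ_injOn 3), cardD3]
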